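/- Consider the MIP reformulation of quantile minimization: minimizing t over x ∈ X, t ∈ ℝ, v ∈ {0,1}^N subject to M(1−vᵢ) ≥ fᵢ(x) − t for all i and Σᵢ wᵢvᵢ ≥ τ, where M ≥ max_{x∈X} max_i fᵢ(x) − min_{x∈X} min_i fᵢ(x). Its optimal value equals min_{x∈X} Q(x) where Q(x) = inf{t : Σᵢ wᵢ·1{fᵢ(x) ≤ t} ≥ τ}. -/
import Mathlib


theorem stmt_16 {n N : ℕ} (X : Set (EuclideanSpace ℝ (Fin n))) (hX : IsCompact X)
    (hXne : X.Nonempty)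
    (f : Fin N → EuclideanSpace ℝ (Fin n) → ℝ) (hf : ∀ i, ContinuousOn (f i) X)
    (w : Fin N → ℝ) (hw : ∀ i, 0 < w i) (hsum : ∑ i, w i = 1)
    (τ : ℝ) (hτ : τ ∈ Set.Ioo (0 : ℝ) 1) (M : ℝ)
    (hM : ∀ x ∈ X, ∀ x' ∈ X, ∀ i j, f i x - f j x' ≤ M) :
    sInf {t : ℝ | ∃ x ∈ X, ∃ v : Fin N → ℝ, (∀ i, v i = 0 ∨ v i = 1) ∧
        (∀ i, f i x - t ≤ M * (1 - v i)) ∧ τ ≤ ∑ i, w i * v i} =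
      sInf ((fun x => sInf {t : ℝ | τ ≤ ∑ i, if f i x ≤ t then w i else 0}) '' X) := by
  obtain ⟨x₀, hx₀⟩ := hXne
  have hN : N ≠ 0 := by
    rintro rfl
    simp at hsum
  set S : Set ℝ := {t : ℝ | ∃ x ∈ X, ∃ v : Fin N → ℝ, (∀ i, v i = 0 ∨ v i = 1) ∧
        (∀ i, f i x - t ≤ M * (1 - v i)) ∧ τ ≤ ∑ i, w i * v i} with hS
  set T : EuclideanSpace ℝ (Fin n) → Set ℝ :=
    fun x => {t : ℝ | τ ≤ ∑ i, if f i x ≤ t then w i else 0} with hT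
  have j₀ : Fin N := ⟨0, Nat.pos_of_ne_zero hN⟩
  set L : ℝ := f j₀ x₀ - M with hL
  -- existence of an index below t
  have hex : ∀ x t, t ∈ T x → ∃ i, f i x ≤ t := by
    intro x t ht
    by_contra h
    push_neg at h
    have : (∑ i, if f i x ≤ t then w i else 0) = 0 := by
      apply Finset.sum_eq_zero
      intro i _
      exact if_neg (not_le.mpr (h i))
    simp only [hT, Set.mem_setOf_eq, this] at ht
    linarith [hτ.1]
  -- lower bound on T x
  have hClow : ∀ x ∈ X, ∀ t ∈ T x, L ≤ t := by
    intro x hx t ht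
    obtain ⟨i, hi⟩ := hex x t ht
    have := hM x₀ hx₀ x hx j₀ i
    simp only [hL]
    linarith
  -- T x nonempty
  have hTne : ∀ x, (T x).Nonempty := by
    intro x
    obtain ⟨t, ht⟩ := Finite.exists_le (fun i => f i x)
    refine ⟨t, ?_⟩
    have : (∑ i, if f i x ≤ t then w i else 0) = ∑ i, w i := by
      apply Finset.sum_congr rfl
      intro i _
      exact if_pos (ht i)
    simp only [hT, Set.mem_setOf_eq, this, hsum]
    exact hτ.2.le
  -- T x ⊆ S for x ∈ X
  have hTsubS : ∀ x ∈ X, ∀ t ∈ T x, t ∈ S := by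
    intro x hx t ht
    obtain ⟨j, hj⟩ := hex x t ht
    refine ⟨x, hx, fun i => if f i x ≤ t then 1 else 0, ?_, ?_, ?_⟩
    · intro i
      by_cases h : f i x ≤ t <;> simp [h]
    · intro i
      by_cases h : f i x ≤ t
      · simp [h]
      · simp [h]
        have := hM x hx x hx i j
        linarith
    · have : (∑ i, w i * (if f i x ≤ t then 1 else 0)) =
          ∑ i, if f i x ≤ t then w i else 0 := by
        apply Finset.sum_congr rfl
        intro i _
        by_cases h : f i x ≤ t <;> simp [h]
      rw [this]
      exact ht
  -- S ⊆ ⋃ T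
  have hSsubT : ∀ t ∈ S, ∃ x ∈ X, t ∈ T x := by
    rintro t ⟨x, hx, v, hbin, hcon, hτv⟩
    refine ⟨x, hx, ?_⟩
    have key : ∀ i ∈ Finset.univ, w i * v i ≤ (if f i x ≤ t then w i else 0) := by
      intro i _
      rcases hbin i with h0 | h1
      · rw [h0, mul_zero]
        by_cases h : f i x ≤ t <;> simp [h, (hw i).le]
      · have : f i x ≤ t := by
          have := hcon i
          rw [h1] at this
          simp at this
          linarith
        rw [h1, mul_one, if_pos this]
    exact le_trans hτv (Finset.sum_le_sum key)
  -- basic facts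
  have hSne : S.Nonempty := by
    obtain ⟨t, ht⟩ := hTne x₀
    exact ⟨t, hTsubS x₀ hx₀ t ht⟩
  have hSbdd : BddBelow S := by
    refine ⟨L, fun t ht => ?_⟩
    obtain ⟨x, hx, htx⟩ := hSsubT t ht
    exact hClow x hx t htx
  have hTbdd : ∀ x ∈ X, BddBelow (T x) := fun x hx => ⟨L, fun t ht => hClow x hx t ht⟩
  have hQlow : ∀ x ∈ X, L ≤ sInf (T x) := fun x hx => le_csInf (hTne x) (hClow x hx)
  have hQne : ((fun x => sInf (T x)) '' X).Nonempty := ⟨_, ⟨x₀, hx₀, rfl⟩⟩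
  have hQbdd : BddBelow ((fun x => sInf (T x)) '' X) := by
    refine ⟨L, ?_⟩
    rintro q ⟨x, hx, rfl⟩
    exact hQlow x hx
  apply le_antisymm
  · apply le_csInf hQne
    rintro q ⟨x, hx, rfl⟩
    exact csInf_le_csInf hSbdd (hTne x) (fun t ht => hTsubS x hx t ht)
  · apply le_csInf hSne
    intro t ht
    obtain ⟨x, hx, htx⟩ := hSsubT t ht
    calc sInf ((fun x => sInf (T x)) '' X) ≤ sInf (T x) :=
          csInf_le hQbdd ⟨x, hx, rfl⟩
      _ ≤ t := csInf_le (hTbdd x hx) htx
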